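/- The normalized mean distance on the unit sphere converges to √2 as the dimension grows: lim_{d→∞} 2^{d−1} (Γ(d/2))² / (√π · Γ(d − 1/2)) = √2, where the limit is taken over integers d → ∞. -/

import Mathlib

open Real Filter

private lemma le_of_sq_le' {a b : ℝ} (ha : 0 ≤ a) (hb : 0 ≤ b) (h : a ^ 2 ≤ b ^ 2) : a ≤ b := by
  have := Real.sqrt_le_sqrt h
  rwa [Real.sqrt_sq ha, Real.sqrt_sq hb] at this

/-- Log-convexity step: `Γ(x+1/2)² ≤ Γ(x) Γ(x+1)`. -/
private lemma gamma_half_sq_le {x : ℝ} (hx : 0 < x) :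
    Real.Gamma (x + 1 / 2) ^ 2 ≤ Real.Gamma x * Real.Gamma (x + 1) := by
  have h := Real.Gamma_mul_add_mul_le_rpow_Gamma_mul_rpow_Gamma hx
    (by linarith : (0:ℝ) < x + 1) (by norm_num : (0:ℝ) < 1/2) (by norm_num : (0:ℝ) < 1/2)
    (by norm_num)
  have he : (1/2 : ℝ) * x + 1/2 * (x + 1) = x + 1/2 := by ring
  rw [he] at h
  have hg1 : 0 ≤ Real.Gamma x := (Real.Gamma_pos_of_pos hx).le
  have hg2 : 0 ≤ Real.Gamma (x + 1) := (Real.Gamma_pos_of_pos (by linarith)).le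
  calc Real.Gamma (x + 1/2) ^ 2
      ≤ (Real.Gamma x ^ (1/2:ℝ) * Real.Gamma (x+1) ^ (1/2:ℝ)) ^ 2 := by
        apply pow_le_pow_left₀ (Real.Gamma_pos_of_pos (by linarith)).le h
    _ = Real.Gamma x * Real.Gamma (x + 1) := by
        rw [mul_pow, ← Real.rpow_natCast (Real.Gamma x ^ (1/2:ℝ)) 2,
          ← Real.rpow_natCast (Real.Gamma (x+1) ^ (1/2:ℝ)) 2,
          ← Real.rpow_mul hg1, ← Real.rpow_mul hg2]
        norm_num

/-- Gautschi-type lower bound: `√x · Γ(x+1/2) ≤ Γ(x+1)`. -/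
private lemma gautschi_lower {x : ℝ} (hx : 0 < x) :
    Real.sqrt x * Real.Gamma (x + 1 / 2) ≤ Real.Gamma (x + 1) := by
  have hg := Real.Gamma_pos_of_pos (show (0:ℝ) < x + 1/2 by linarith)
  have h := gamma_half_sq_le hx
  rw [Real.Gamma_add_one hx.ne'] at h
  apply le_of_sq_le' (by positivity) (Real.Gamma_pos_of_pos (by linarith)).le
  rw [mul_pow, Real.sq_sqrt hx.le, Real.Gamma_add_one hx.ne']
  calc x * Real.Gamma (x + 1/2) ^ 2 ≤ x * (Real.Gamma x * (x * Real.Gamma x)) := by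
        apply mul_le_mul_of_nonneg_left h hx.le
    _ = (x * Real.Gamma x) ^ 2 := by ring

/-- Gautschi-type upper bound: `Γ(x+1) ≤ √(x+1/2) · Γ(x+1/2)`. -/
private lemma gautschi_upper {x : ℝ} (hx : 0 < x) :
    Real.Gamma (x + 1) ≤ Real.sqrt (x + 1 / 2) * Real.Gamma (x + 1 / 2) := by
  have hx2 : (0:ℝ) < x + 1/2 := by linarith
  have h := gamma_half_sq_le hx2
  have he1 : x + 1/2 + 1/2 = x + 1 := by ring
  have he2 : x + 1/2 + 1 = (x + 1/2) + 1 := by ring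
  rw [he1, Real.Gamma_add_one hx2.ne'] at h
  apply le_of_sq_le' (Real.Gamma_pos_of_pos (by linarith)).le (by positivity)
  rw [mul_pow, Real.sq_sqrt hx2.le]
  calc Real.Gamma (x+1) ^ 2 ≤ Real.Gamma (x+1/2) * ((x+1/2) * Real.Gamma (x+1/2)) := h
    _ = (x + 1/2) * Real.Gamma (x+1/2) ^ 2 := by ring

private lemma main_facts (d : ℕ) (hd : 2 ≤ d) :
    (2:ℝ) ≤ (d:ℝ) ∧
    ((2 : ℝ) ^ ((d : ℝ) - 1) * Real.Gamma ((d : ℝ) / 2) ^ 2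
        / (Real.sqrt π * Real.Gamma ((d : ℝ) - 1 / 2))
      = Real.Gamma ((d:ℝ)/2) / Real.Gamma ((d:ℝ)/2 + 1/2)
          * (Real.Gamma (d:ℝ) / Real.Gamma ((d:ℝ) - 1/2))) ∧
    0 < Real.Gamma ((d:ℝ)/2) ∧ 0 < Real.Gamma ((d:ℝ)/2 + 1/2) ∧
    0 < Real.Gamma (d:ℝ) ∧ 0 < Real.Gamma ((d:ℝ) - 1/2) ∧
    Real.Gamma ((d:ℝ)/2 + 1/2) ≤ Real.sqrt ((d:ℝ)/2) * Real.Gamma ((d:ℝ)/2) ∧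
    Real.sqrt ((d:ℝ)/2 - 1/2) * Real.Gamma ((d:ℝ)/2) ≤ Real.Gamma ((d:ℝ)/2 + 1/2) ∧
    Real.sqrt ((d:ℝ) - 1) * Real.Gamma ((d:ℝ) - 1/2) ≤ Real.Gamma (d:ℝ) ∧
    Real.Gamma (d:ℝ) ≤ Real.sqrt ((d:ℝ) - 1/2) * Real.Gamma ((d:ℝ) - 1/2) := by
  have hD : (2:ℝ) ≤ (d:ℝ) := by exact_mod_cast hd
  set D := (d:ℝ) with hDdef
  have hg1 : 0 < Real.Gamma (D/2) := Real.Gamma_pos_of_pos (by linarith)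
  have hg2 : 0 < Real.Gamma (D/2 + 1/2) := Real.Gamma_pos_of_pos (by linarith)
  have hg3 : 0 < Real.Gamma D := Real.Gamma_pos_of_pos (by linarith)
  have hg4 : 0 < Real.Gamma (D - 1/2) := Real.Gamma_pos_of_pos (by linarith)
  have hx1 : (0:ℝ) < D/2 - 1/2 := by linarith
  have hx2 : (0:ℝ) < D - 1 := by linarith
  refine ⟨hD, ?_, hg1, hg2, hg3, hg4, ?_, ?_, ?_, ?_⟩
  · -- duplication-formula identity
    have hdup := Real.Gamma_mul_Gamma_add_half (D/2)
    rw [show 2*(D/2) = D by ring] at hdup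
    have hdup2 : (2:ℝ)^(D-1) * (Real.Gamma (D/2) * Real.Gamma (D/2 + 1/2))
        = Real.Gamma D * Real.sqrt π := by
      rw [hdup]
      calc (2:ℝ)^(D-1) * (Real.Gamma D * (2:ℝ)^(1-D) * Real.sqrt π)
          = ((2:ℝ)^(D-1) * (2:ℝ)^(1-D)) * (Real.Gamma D * Real.sqrt π) := by ring
        _ = Real.Gamma D * Real.sqrt π := by
            rw [← Real.rpow_add two_pos]
            norm_num
    rw [div_mul_div_comm, div_eq_div_iff (by positivity) (by positivity)]
    linear_combination (Real.Gamma (D/2) * Real.Gamma (D - 1/2)) * hdup2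
  · have h := gautschi_upper hx1
    rw [show D/2 - 1/2 + 1 = D/2 + 1/2 by ring, show D/2 - 1/2 + 1/2 = D/2 by ring] at h
    exact h
  · have h := gautschi_lower hx1
    rw [show D/2 - 1/2 + 1 = D/2 + 1/2 by ring, show D/2 - 1/2 + 1/2 = D/2 by ring] at h
    exact h
  · have h := gautschi_lower hx2
    rw [show D - 1 + 1 = D by ring, show D - 1 + 1/2 = D - 1/2 by ring] at h
    exact h
  · have h := gautschi_upper hx2
    rw [show D - 1 + 1 = D by ring, show D - 1 + 1/2 = D - 1/2 by ring] at h
    exact h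

theorem mean_distance_tendsto_sqrt_two :
    Tendsto
      (fun d : ℕ =>
        (2 : ℝ) ^ ((d : ℝ) - 1) * Real.Gamma ((d : ℝ) / 2) ^ 2
          / (Real.sqrt π * Real.Gamma ((d : ℝ) - 1 / 2)))
      atTop (nhds (Real.sqrt 2)) := by
  -- lower and upper squeeze functions
  set l : ℕ → ℝ := fun d => Real.sqrt (2 * ((d:ℝ) - 1) / d) with hl
  set u : ℕ → ℝ := fun d => Real.sqrt ((2 * (d:ℝ) - 1) / ((d:ℝ) - 1)) with hu
  have hld : Tendsto l atTop (nhds (Real.sqrt 2)) := by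
    have h1 : Tendsto (fun d : ℕ => 2 - 2 / (d:ℝ)) atTop (nhds 2) := by
      simpa using tendsto_const_nhds.sub
        (tendsto_const_nhds.div_atTop (tendsto_natCast_atTop_atTop (R := ℝ)))
    have h2 : Tendsto (fun d : ℕ => 2 * ((d:ℝ) - 1) / d) atTop (nhds 2) := by
      apply h1.congr'
      filter_upwards [eventually_gt_atTop 0] with d hd
      have : (d:ℝ) ≠ 0 := Nat.cast_ne_zero.mpr hd.ne'
      field_simp
    exact (Real.continuous_sqrt.tendsto 2).comp h2
  have hud : Tendsto u atTop (nhds (Real.sqrt 2)) := by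
    have h0 : Tendsto (fun d : ℕ => (d:ℝ) - 1) atTop atTop :=
      tendsto_atTop_add_const_right _ (-1) (tendsto_natCast_atTop_atTop (R := ℝ)) |>.congr
        (fun d => by ring)
    have h1 : Tendsto (fun d : ℕ => 2 + 1 / ((d:ℝ) - 1)) atTop (nhds 2) := by
      simpa [one_div] using tendsto_const_nhds.add
        ((tendsto_const_nhds (x := (1:ℝ)) (f := atTop (α := ℕ))).div_atTop h0)
    have h2 : Tendsto (fun d : ℕ => (2 * (d:ℝ) - 1) / ((d:ℝ) - 1)) atTop (nhds 2) := by
      apply h1.congr'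
      filter_upwards [eventually_gt_atTop 1] with d hd
      have hd1 : (1:ℝ) < (d:ℝ) := by exact_mod_cast hd
      have : (d:ℝ) - 1 ≠ 0 := by linarith
      field_simp
      ring
    exact (Real.continuous_sqrt.tendsto 2).comp h2
  apply tendsto_of_tendsto_of_tendsto_of_le_of_le' hld hud
  · -- lower bound l d ≤ f d, for d ≥ 2
    filter_upwards [eventually_ge_atTop 2] with d hd
    obtain ⟨hD, key, hg1, hg2, hg3, hg4, hA1, hA2, hB1, hB2⟩ := main_facts d hd
    set D := (d:ℝ)
    have hs1 : 0 < Real.sqrt (D/2) := Real.sqrt_pos.mpr (by linarith)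
    have hA' : 1 / Real.sqrt (D/2) ≤ Real.Gamma (D/2) / Real.Gamma (D/2 + 1/2) := by
      rw [div_le_div_iff₀ hs1 hg2, one_mul, mul_comm]
      exact hA1
    have hB' : Real.sqrt (D-1) ≤ Real.Gamma D / Real.Gamma (D - 1/2) := by
      rw [le_div_iff₀ hg4]
      exact hB1
    calc l d = Real.sqrt ((D-1) / (D/2)) := by
          simp only [hl]
          congr 1
          field_simp
          ring
        _ = Real.sqrt (D-1) / Real.sqrt (D/2) := Real.sqrt_div (by linarith) _
        _ = 1 / Real.sqrt (D/2) * Real.sqrt (D-1) := by ring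
        _ ≤ Real.Gamma (D/2) / Real.Gamma (D/2 + 1/2) * (Real.Gamma D / Real.Gamma (D - 1/2)) :=
            mul_le_mul hA' hB' (Real.sqrt_nonneg _) (by positivity)
        _ = _ := key.symm
  · filter_upwards [eventually_ge_atTop 2] with d hd
    obtain ⟨hD, key, hg1, hg2, hg3, hg4, hA1, hA2, hB1, hB2⟩ := main_facts d hd
    set D := (d:ℝ)
    have hs2 : 0 < Real.sqrt (D/2 - 1/2) := Real.sqrt_pos.mpr (by linarith)
    have hA' : Real.Gamma (D/2) / Real.Gamma (D/2 + 1/2) ≤ 1 / Real.sqrt (D/2 - 1/2) := by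
      rw [div_le_div_iff₀ hg2 hs2, one_mul, mul_comm]
      exact hA2
    have hB' : Real.Gamma D / Real.Gamma (D - 1/2) ≤ Real.sqrt (D - 1/2) := by
      rw [div_le_iff₀ hg4]
      exact hB2
    calc (fun d : ℕ =>
        (2 : ℝ) ^ ((d : ℝ) - 1) * Real.Gamma ((d : ℝ) / 2) ^ 2
          / (Real.sqrt π * Real.Gamma ((d : ℝ) - 1 / 2))) d
          = Real.Gamma (D/2) / Real.Gamma (D/2 + 1/2) * (Real.Gamma D / Real.Gamma (D - 1/2)) :=
            key
        _ ≤ 1 / Real.sqrt (D/2 - 1/2) * Real.sqrt (D - 1/2) :=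
            mul_le_mul hA' hB' (by positivity) (by positivity)
        _ = Real.sqrt (D - 1/2) / Real.sqrt (D/2 - 1/2) := by ring
        _ = Real.sqrt ((D - 1/2) / (D/2 - 1/2)) := (Real.sqrt_div (by linarith) _).symm
        _ = u d := by
          simp only [hu]
          congr 1
          have : D - 1 ≠ 0 := by linarith
          simp only [D] at this ⊢
          field_simp
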